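/- Let ω be a radial weight in D̂: there exist C > 0 and β > 0 such that ω̂(r) ≤ C·((1-r)/(1-t))^β · ω̂(t) for all 0 ≤ r ≤ t < 1. Then there exists a constant c > 0 such that J_ω(r) = ∫_0^r dt/(ω̂(t)(1-t)) ≥ c·(1-(1-r)^β)/ω̂(r) for all 0 ≤ r < 1. -/

import Mathlib

open MeasureTheory Set

/-- `what ω r = ∫_r^1 ω(s) ds`. -/
noncomputable def what (ω : ℝ → ℝ) (r : ℝ) : ℝ := ∫ s in r..(1:ℝ), ω s

/-- `Jom ω r = ∫_0^r dt/(ω̂(t)(1-t))`. -/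
noncomputable def Jom (ω : ℝ → ℝ) (r : ℝ) : ℝ := ∫ t in (0:ℝ)..r, 1 / (what ω t * (1 - t))

theorem stmt_7 (ω : ℝ → ℝ)
    (hint : IntegrableOn ω (Set.Ico (0:ℝ) 1))
    (hnn : ∀ r ∈ Set.Ico (0:ℝ) 1, 0 ≤ ω r)
    (hpos : ∀ r ∈ Set.Ico (0:ℝ) 1, 0 < what ω r)
    (C β : ℝ) (hC : 0 < C) (hβ : 0 < β)
    (hDD : ∀ r t : ℝ, 0 ≤ r → r ≤ t → t < 1 →
      what ω r ≤ C * ((1 - r) / (1 - t)) ^ β * what ω t) :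
    ∃ c : ℝ, 0 < c ∧ ∀ r ∈ Set.Ico (0:ℝ) 1,
      Jom ω r ≥ c * (1 - (1 - r) ^ β) / what ω r := by
  refine ⟨1 / (C * β), by positivity, ?_⟩
  rintro r ⟨hr0, hr1⟩
  have hIcc : IntegrableOn ω (Icc (0:ℝ) 1) := by
    rwa [integrableOn_Icc_iff_integrableOn_Ico]
  have hcont : ContinuousOn (what ω) (Icc (0:ℝ) 1) := by
    have := intervalIntegral.continuousOn_primitive_interval_left
      (a := (0:ℝ)) (b := 1) (μ := volume) (f := ω) (by rwa [uIcc_of_le zero_le_one])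
    simp only [uIcc_of_le (zero_le_one : (0:ℝ) ≤ 1)] at this
    exact this
  have hW : 0 < what ω r := hpos r ⟨hr0, hr1⟩
  have h1r : 0 < 1 - r := by linarith
  set K : ℝ := (1 - r) ^ β / (C * what ω r) with hK
  have hKpos : 0 < K := by positivity
  -- pointwise bound on [0, r]
  have hle : ∀ t ∈ Icc (0:ℝ) r, K * (1 - t) ^ (-β - 1) ≤ 1 / (what ω t * (1 - t)) := by
    intro t ht
    have ht1 : t < 1 := lt_of_le_of_lt ht.2 hr1
    have h1t : 0 < 1 - t := by linarith
    have hWt : 0 < what ω t := hpos t ⟨ht.1, ht1⟩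
    rw [le_div_iff₀ (by positivity)]
    have hbound := hDD t r ht.1 ht.2 hr1
    calc K * (1 - t) ^ (-β - 1) * (what ω t * (1 - t))
        ≤ K * (1 - t) ^ (-β - 1) * ((C * ((1 - t) / (1 - r)) ^ β * what ω r) * (1 - t)) := by
          apply mul_le_mul_of_nonneg_left _ (by positivity)
          exact mul_le_mul_of_nonneg_right hbound (le_of_lt h1t)
      _ = 1 := by
          rw [Real.div_rpow (le_of_lt h1t) (le_of_lt h1r), hK]
          have hpow : (1 - t) ^ (-β - 1) * ((1 - t) ^ β * (1 - t)) = 1 := by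
            rw [← Real.rpow_add_one (ne_of_gt h1t), ← Real.rpow_add h1t]
            norm_num
          have heq : (1 - r) ^ β / (C * what ω r) * (1 - t) ^ (-β - 1) *
              (C * ((1 - t) ^ β / (1 - r) ^ β) * what ω r * (1 - t))
              = ((1 - t) ^ (-β - 1) * ((1 - t) ^ β * (1 - t))) *
                ((1 - r) ^ β * (C * what ω r)) / ((1 - r) ^ β * (C * what ω r)) := by
            ring
          rw [heq, hpow, one_mul, div_self (by positivity)]
  -- integrability
  have hfc : ContinuousOn (fun t => 1 / (what ω t * (1 - t))) (Icc (0:ℝ) r) := by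
    apply ContinuousOn.div continuousOn_const
    · exact ((hcont.mono (Icc_subset_Icc_right (le_of_lt hr1))).mul
        (continuousOn_const.sub continuousOn_id))
    · intro t ht
      have ht1 : t < 1 := lt_of_le_of_lt ht.2 hr1
      have := hpos t ⟨ht.1, ht1⟩
      have : (0:ℝ) < 1 - t := by linarith
      positivity
  have hgc : ContinuousOn (fun t => K * (1 - t) ^ (-β - 1)) (Icc (0:ℝ) r) := by
    apply continuousOn_const.mul
    apply ContinuousOn.rpow_const (continuousOn_const.sub continuousOn_id)
    intro t ht
    left
    have : t < 1 := lt_of_le_of_lt ht.2 hr1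
    simp only [Pi.sub_apply, id_eq]
    exact ne_of_gt (by linarith)
  have hfint : IntervalIntegrable (fun t => 1 / (what ω t * (1 - t))) volume 0 r :=
    hfc.intervalIntegrable_of_Icc hr0
  have hgint : IntervalIntegrable (fun t => K * (1 - t) ^ (-β - 1)) volume 0 r :=
    hgc.intervalIntegrable_of_Icc hr0
  have hmono := intervalIntegral.integral_mono_on hr0 hgint hfint hle
  -- compute the lower integral
  have hcomp : (∫ t in (0:ℝ)..r, (1 - t) ^ (-β - 1))
      = ∫ u in (1 - r)..(1:ℝ), u ^ (-β - 1) := by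
    have := intervalIntegral.integral_comp_sub_left (a := (0:ℝ)) (b := r)
      (fun u : ℝ => u ^ (-β - 1)) 1
    simpa using this
  have hval : (∫ u in (1 - r)..(1:ℝ), u ^ (-β - 1))
      = (1 - (1 - r) ^ (-β)) / (-β) := by
    rw [integral_rpow (Or.inr ⟨by intro h; linarith, by
      rw [uIcc_of_le (by linarith : 1 - r ≤ 1)]
      rintro ⟨h0, -⟩; linarith⟩)]
    norm_num
  have hcalc : (∫ t in (0:ℝ)..r, K * (1 - t) ^ (-β - 1))
      = 1 / (C * β) * (1 - (1 - r) ^ β) / what ω r := by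
    rw [intervalIntegral.integral_const_mul, hcomp, hval, hK]
    have hinv : (1 - r) ^ β * (1 - r) ^ (-β) = 1 := by
      rw [← Real.rpow_add h1r]; norm_num
    have hsub : (1 - r) ^ β * (1 - (1 - r) ^ (-β)) = (1 - r) ^ β - 1 := by
      rw [mul_sub, mul_one, hinv]
    have hC' : C ≠ 0 := ne_of_gt hC
    have hβ' : β ≠ 0 := ne_of_gt hβ
    have hW' : what ω r ≠ 0 := ne_of_gt hW
    calc (1 - r) ^ β / (C * what ω r) * ((1 - (1 - r) ^ (-β)) / (-β))
        = ((1 - r) ^ β * (1 - (1 - r) ^ (-β))) * (1 / (C * what ω r * (-β))) := by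
          ring
      _ = ((1 - r) ^ β - 1) * (1 / (C * what ω r * (-β))) := by rw [hsub]
      _ = 1 / (C * β) * (1 - (1 - r) ^ β) / what ω r := by
          field_simp
          ring
  rw [ge_iff_le, ← hcalc]
  exact hmono
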